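/- Let (A, C)_ψ be an entwining structure over a commutative ring K: an algebra A, a coalgebra C, and a K-linear map ψ : C ⊗ A → A ⊗ C satisfying the entwining axioms. Then the A-bimodule 𝒞 = A ⊗_K C with left action a''·(a' ⊗ c) = a''a' ⊗ c, right action (a' ⊗ c)·a = a'·ψ(c ⊗ a), comultiplication A ⊗ Δ_C, and counit A ⊗ ε_C, is an A-coring: the comultiplication and counit are A-bilinear, coassociative, and counital. -/
import Mathlib


/-!
Statement 18.  Let `(A, C)_ψ` be an entwining structure over a commutative ring `K`:
an algebra `A`, a coalgebra `C`, and a `K`-linear map `ψ : C ⊗ A → A ⊗ C` satisfying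
the entwining axioms.  Then the `A`-bimodule `𝒞 = A ⊗_K C`, with left action
`a''·(a' ⊗ c) = a''a' ⊗ c`, right action `(a' ⊗ c)·a = a'·ψ(c ⊗ a)`,
comultiplication `A ⊗ Δ_C` and counit `A ⊗ ε_C`, is an `A`-coring: the
comultiplication and counit are `A`-bilinear, coassociative and counital.
(The canonical identification `𝒞 ⊗_A 𝒞 ≅ A ⊗ C ⊗ C` is used throughout, so that the
coring axioms are expressed on `A ⊗ C ⊗ C`.)
-/

universe u

open TensorProduct LinearMap

variable (K : Type u) [CommRing K] (A : Type u) [Ring A] [Algebra K A]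
  (C : Type u) [AddCommGroup C] [Module K C] [Coalgebra K C]
  (ψ : C ⊗[K] A →ₗ[K] A ⊗[K] C)

/-- The four axioms of an entwining structure `(A, C)_ψ`. -/
def IsEntwining : Prop :=
  -- `ψ ∘ (C ⊗ μ) = (μ ⊗ C) ∘ (A ⊗ ψ) ∘ (ψ ⊗ A)`
  (ψ ∘ₗ lTensor C (mul' K A) =
    rTensor C (mul' K A) ∘ₗ (TensorProduct.assoc K A A C).symm.toLinearMap ∘ₗ
      lTensor A ψ ∘ₗ (TensorProduct.assoc K A C A).toLinearMap ∘ₗ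
        rTensor A ψ ∘ₗ (TensorProduct.assoc K C A A).symm.toLinearMap) ∧
  -- `(A ⊗ Δ) ∘ ψ = (ψ ⊗ C) ∘ (C ⊗ ψ) ∘ (Δ ⊗ A)`
  (lTensor A Coalgebra.comul ∘ₗ ψ =
    (TensorProduct.assoc K A C C).toLinearMap ∘ₗ rTensor C ψ ∘ₗ
      (TensorProduct.assoc K C A C).symm.toLinearMap ∘ₗ lTensor C ψ ∘ₗ
        (TensorProduct.assoc K C C A).toLinearMap ∘ₗ rTensor A Coalgebra.comul) ∧
  -- `ψ (c ⊗ 1) = 1 ⊗ c`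
  (∀ c : C, ψ (c ⊗ₜ (1 : A)) = (1 : A) ⊗ₜ c) ∧
  -- `(A ⊗ ε) ∘ ψ = ε ⊗ A`
  ((TensorProduct.rid K A).toLinearMap ∘ₗ lTensor A Coalgebra.counit ∘ₗ ψ =
    (TensorProduct.lid K A).toLinearMap ∘ₗ rTensor A Coalgebra.counit)

/-- The right `A`-action on `𝒞 = A ⊗ C` induced by `ψ` : `(a' ⊗ c)·a = a'·ψ(c ⊗ a)`. -/
noncomputable def entRAct : ((A ⊗[K] C) ⊗[K] A) →ₗ[K] A ⊗[K] C :=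
  rTensor C (mul' K A) ∘ₗ (TensorProduct.assoc K A A C).symm.toLinearMap ∘ₗ
    lTensor A ψ ∘ₗ (TensorProduct.assoc K A C A).toLinearMap

/-- The left `A`-action on `𝒞 = A ⊗ C` : `a''·(a' ⊗ c) = a''a' ⊗ c`. -/
noncomputable def entLAct (a : A) : (A ⊗[K] C) →ₗ[K] A ⊗[K] C :=
  rTensor C (LinearMap.mulLeft K a)

/-- The comultiplication `A ⊗ Δ_C : 𝒞 → 𝒞 ⊗_A 𝒞 ≅ (A ⊗ C) ⊗ C`. -/
noncomputable def entComul : (A ⊗[K] C) →ₗ[K] (A ⊗[K] C) ⊗[K] C :=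
  (TensorProduct.assoc K A C C).symm.toLinearMap ∘ₗ lTensor A Coalgebra.comul

/-- The counit `A ⊗ ε_C : 𝒞 → A`. -/
noncomputable def entCounit : (A ⊗[K] C) →ₗ[K] A :=
  (TensorProduct.rid K A).toLinearMap ∘ₗ lTensor A Coalgebra.counit

/-- The right `A`-action on `𝒞 ⊗_A 𝒞 ≅ (A ⊗ C) ⊗ C` (acting on the second factor
through `ψ`). -/
noncomputable def entRAct₂ : (((A ⊗[K] C) ⊗[K] C) ⊗[K] A) →ₗ[K] (A ⊗[K] C) ⊗[K] C :=
  rTensor C (entRAct K A C ψ) ∘ₗ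
    (TensorProduct.assoc K (A ⊗[K] C) A C).symm.toLinearMap ∘ₗ
      lTensor (A ⊗[K] C) ψ ∘ₗ (TensorProduct.assoc K (A ⊗[K] C) C A).toLinearMap

set_option linter.unusedSectionVars false

-- basic unfolding lemmas
lemma entLAct_tmul (a a' : A) (c : C) :
    entLAct K A C a (a' ⊗ₜ[K] c) = (a * a') ⊗ₜ[K] c := by
  simp [entLAct]

lemma hL (a : A) (y : A ⊗[K] C) :
    rTensor C (mul' K A) ((TensorProduct.assoc K A A C).symm (a ⊗ₜ[K] y)) =
      entLAct K A C a y := by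
  induction y using TensorProduct.induction_on with
  | zero => simp
  | tmul b c => simp [entLAct]
  | add u v hu hv => simp only [tmul_add, map_add, hu, hv]

lemma hL1 (a : A) (c : C) (b : A) :
    entRAct K A C ψ ((a ⊗ₜ[K] c) ⊗ₜ[K] b) = entLAct K A C a (ψ (c ⊗ₜ[K] b)) := by
  simp only [entRAct, LinearMap.comp_apply, LinearEquiv.coe_coe, TensorProduct.assoc_tmul,
    lTensor_tmul]
  exact hL K A C a _

lemma hLL (a b : A) (y : A ⊗[K] C) :
    entLAct K A C (a * b) y = entLAct K A C a (entLAct K A C b y) := by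
  induction y using TensorProduct.induction_on with
  | zero => simp
  | tmul a' c => simp [entLAct_tmul, mul_assoc]
  | add u v hu hv => simp only [map_add, hu, hv]

lemma entCounit_tmul (a : A) (c : C) :
    entCounit K A C (a ⊗ₜ[K] c) = Coalgebra.counit (R := K) c • a := by
  simp [entCounit]

lemma entComul_tmul (a : A) (c : C) :
    entComul K A C (a ⊗ₜ[K] c) =
      (TensorProduct.assoc K A C C).symm (a ⊗ₜ[K] Coalgebra.comul (R := K) c) := by
  simp [entComul]

lemma ax1 (hent : IsEntwining K A C ψ) (c : C) (a b : A) :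
    ψ (c ⊗ₜ[K] (a * b)) = entRAct K A C ψ (ψ (c ⊗ₜ[K] a) ⊗ₜ[K] b) := by
  have h := LinearMap.congr_fun hent.1 (c ⊗ₜ[K] (a ⊗ₜ[K] b))
  simp only [LinearMap.comp_apply, LinearEquiv.coe_coe, lTensor_tmul, rTensor_tmul,
    TensorProduct.assoc_symm_tmul, TensorProduct.assoc_tmul, mul'_apply] at h
  rw [h]
  simp only [entRAct, LinearMap.comp_apply, LinearEquiv.coe_coe]

lemma ax2 (hent : IsEntwining K A C ψ) (c : C) (a : A) :
    lTensor A (Coalgebra.comul (R := K)) (ψ (c ⊗ₜ[K] a)) =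
      (TensorProduct.assoc K A C C) (rTensor C ψ ((TensorProduct.assoc K C A C).symm
        (lTensor C ψ ((TensorProduct.assoc K C C A)
          ((Coalgebra.comul (R := K) c) ⊗ₜ[K] a))))) := by
  have h := LinearMap.congr_fun hent.2.1 (c ⊗ₜ[K] a)
  simpa only [LinearMap.comp_apply, LinearEquiv.coe_coe, rTensor_tmul] using h

lemma ax4 (hent : IsEntwining K A C ψ) (c : C) (a : A) :
    entCounit K A C (ψ (c ⊗ₜ[K] a)) = Coalgebra.counit (R := K) c • a := by
  have h := LinearMap.congr_fun hent.2.2.2 (c ⊗ₜ[K] a)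
  simpa [entCounit] using h

-- Conjunct 3: left/right actions commute
lemma c3 (hent : IsEntwining K A C ψ) (x : A ⊗[K] C) (a b : A) :
    entRAct K A C ψ ((entLAct K A C b x) ⊗ₜ[K] a) =
      entLAct K A C b (entRAct K A C ψ (x ⊗ₜ[K] a)) := by
  induction x using TensorProduct.induction_on with
  | zero => simp
  | tmul a' c => rw [entLAct_tmul, hL1, hL1, ← hLL]
  | add u v hu hv => simp only [map_add, add_tmul, hu, hv]

-- Conjunct 1: associativity of right action
lemma c1 (hent : IsEntwining K A C ψ) (x : A ⊗[K] C) (a b : A) :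
    entRAct K A C ψ ((entRAct K A C ψ (x ⊗ₜ[K] a)) ⊗ₜ[K] b) =
      entRAct K A C ψ (x ⊗ₜ[K] (a * b)) := by
  induction x using TensorProduct.induction_on with
  | zero => simp
  | tmul a' c =>
      rw [hL1, hL1, ax1 K A C ψ hent c a b, c3 K A C ψ hent]
  | add u v hu hv => simp only [map_add, add_tmul, hu, hv]

-- Conjunct 2: unit acts trivially
lemma c2 (hent : IsEntwining K A C ψ) (x : A ⊗[K] C) :
    entRAct K A C ψ (x ⊗ₜ[K] (1 : A)) = x := by
  induction x using TensorProduct.induction_on with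
  | zero => simp
  | tmul a' c => rw [hL1, hent.2.2.1, entLAct_tmul, mul_one]
  | add u v hu hv => simp only [add_tmul, map_add, hu, hv]

-- Conjunct 4: comultiplication is left A-linear
lemma c4 (a : A) (x : A ⊗[K] C) :
    entComul K A C (entLAct K A C a x) =
      rTensor C (entLAct K A C a) (entComul K A C x) := by
  induction x using TensorProduct.induction_on with
  | zero => simp
  | tmul a' c =>
      rw [entLAct_tmul, entComul_tmul, entComul_tmul]
      generalize Coalgebra.comul (R := K) c = z
      induction z using TensorProduct.induction_on with
      | zero => simp
      | tmul c1 c2 => simp [entLAct_tmul]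
      | add u v hu hv => simp only [tmul_add, map_add, hu, hv]
  | add u v hu hv => simp only [map_add, hu, hv]

-- Conjunct 7: counit is left A-linear
lemma c7 (a : A) (x : A ⊗[K] C) :
    entCounit K A C (entLAct K A C a x) = a * entCounit K A C x := by
  induction x using TensorProduct.induction_on with
  | zero => simp
  | tmul a' c => rw [entLAct_tmul, entCounit_tmul, entCounit_tmul, mul_smul_comm]
  | add u v hu hv => simp only [map_add, hu, hv, mul_add]

-- Conjunct 8: counit is right A-linear
lemma c8 (hent : IsEntwining K A C ψ) :
    entCounit K A C ∘ₗ entRAct K A C ψ = mul' K A ∘ₗ rTensor A (entCounit K A C) := by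
  ext a' c a
  simp only [LinearMap.comp_apply, AlgebraTensorModule.curry_apply, curry_apply,
    LinearMap.coe_restrictScalars, rTensor_tmul, mul'_apply]
  rw [hL1, c7, ax4 K A C ψ hent, entCounit_tmul, mul_smul_comm, smul_mul_assoc]

-- Conjunct 5: comultiplication is right A-linear
lemma c5 (hent : IsEntwining K A C ψ) :
    entComul K A C ∘ₗ entRAct K A C ψ =
      entRAct₂ K A C ψ ∘ₗ rTensor A (entComul K A C) := by
  ext a' c a
  simp only [LinearMap.comp_apply, AlgebraTensorModule.curry_apply, curry_apply,
    LinearMap.coe_restrictScalars, rTensor_tmul]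
  rw [hL1, c4, entComul_tmul]
  have : entComul K A C (ψ (c ⊗ₜ[K] a)) =
      (TensorProduct.assoc K A C C).symm (lTensor A (Coalgebra.comul (R := K)) (ψ (c ⊗ₜ[K] a))) := by
    simp [entComul]
  rw [this, ax2 K A C ψ hent, LinearEquiv.symm_apply_apply]
  generalize Coalgebra.comul (R := K) c = z
  induction z using TensorProduct.induction_on with
  | zero => simp [entRAct₂]
  | tmul c1 c2 =>
      simp only [TensorProduct.assoc_tmul, TensorProduct.assoc_symm_tmul, lTensor_tmul,
        entRAct₂, LinearMap.comp_apply, LinearEquiv.coe_coe]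
      generalize ψ (c2 ⊗ₜ[K] a) = y
      induction y using TensorProduct.induction_on with
      | zero => simp
      | tmul b d =>
          simp only [TensorProduct.assoc_symm_tmul, TensorProduct.assoc_tmul,
            rTensor_tmul, lTensor_tmul]
          rw [hL1]
      | add u v hu hv => simp only [tmul_add, map_add, hu, hv]
  | add u v hu hv => simp only [tmul_add, add_tmul, map_add, hu, hv]

-- Conjunct 6: coassociativity
lemma c6 :
    rTensor C (entComul K A C) ∘ₗ entComul K A C =
      (TensorProduct.assoc K (A ⊗[K] C) C C).symm.toLinearMap ∘ₗ
        lTensor (A ⊗[K] C) Coalgebra.comul ∘ₗ entComul K A C := by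
  ext a c
  simp only [LinearMap.comp_apply, AlgebraTensorModule.curry_apply, curry_apply,
    LinearMap.coe_restrictScalars, LinearEquiv.coe_coe]
  rw [entComul_tmul]
  have claim1 : ∀ z : C ⊗[K] C,
      rTensor C (entComul K A C) ((TensorProduct.assoc K A C C).symm (a ⊗ₜ[K] z)) =
        rTensor C (TensorProduct.assoc K A C C).symm.toLinearMap
          (rTensor C (TensorProduct.mk K A (C ⊗[K] C) a)
            (rTensor C (Coalgebra.comul (R := K)) z)) := by
    intro z
    induction z using TensorProduct.induction_on with
    | zero => simp
    | tmul c1 c2 =>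
        simp only [TensorProduct.assoc_symm_tmul, rTensor_tmul, TensorProduct.mk_apply,
          LinearEquiv.coe_coe]
        rw [entComul_tmul]
    | add u v hu hv => simp only [tmul_add, map_add, hu, hv]
  have claim2 : ∀ z : C ⊗[K] C,
      (TensorProduct.assoc K (A ⊗[K] C) C C).symm
        (lTensor (A ⊗[K] C) (Coalgebra.comul (R := K))
          ((TensorProduct.assoc K A C C).symm (a ⊗ₜ[K] z))) =
        (TensorProduct.assoc K (A ⊗[K] C) C C).symm
          (rTensor (C ⊗[K] C) (TensorProduct.mk K A C a)
            (lTensor C (Coalgebra.comul (R := K)) z)) := by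
    intro z
    induction z using TensorProduct.induction_on with
    | zero => simp
    | tmul c1 c2 =>
        simp only [TensorProduct.assoc_symm_tmul, lTensor_tmul, rTensor_tmul,
          TensorProduct.mk_apply]
    | add u v hu hv => simp only [tmul_add, map_add, hu, hv]
  rw [claim1, claim2]
  have hco := Coalgebra.coassoc_apply (R := K) c
  rw [← hco]
  generalize rTensor C (Coalgebra.comul (R := K)) (Coalgebra.comul (R := K) c) = w
  induction w using TensorProduct.induction_on with
  | zero => simp
  | tmul z c3 =>
      induction z using TensorProduct.induction_on with
      | zero => simp
      | tmul c1 c2 =>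
          simp only [TensorProduct.assoc_tmul, rTensor_tmul, TensorProduct.mk_apply,
            LinearEquiv.coe_coe, TensorProduct.assoc_symm_tmul]
      | add u v hu hv => simp only [tmul_add, add_tmul, map_add, hu, hv]
  | add u v hu hv => simp only [tmul_add, map_add, hu, hv]

-- Conjunct 9: counit law (right)
lemma c9 :
    rTensor C (entCounit K A C) ∘ₗ entComul K A C = LinearMap.id := by
  ext a c
  simp only [LinearMap.comp_apply, AlgebraTensorModule.curry_apply, curry_apply,
    LinearMap.coe_restrictScalars, LinearMap.id_coe, id_eq]
  rw [entComul_tmul]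
  have claim : ∀ z : C ⊗[K] C,
      rTensor C (entCounit K A C) ((TensorProduct.assoc K A C C).symm (a ⊗ₜ[K] z)) =
        rTensor C (LinearMap.toSpanSingleton K A a)
          (rTensor C (Coalgebra.counit (R := K)) z) := by
    intro z
    induction z using TensorProduct.induction_on with
    | zero => simp
    | tmul c1 c2 =>
        simp only [TensorProduct.assoc_symm_tmul, rTensor_tmul,
          LinearMap.toSpanSingleton_apply]
        rw [entCounit_tmul]
    | add u v hu hv => simp only [tmul_add, map_add, hu, hv]
  rw [claim, Coalgebra.rTensor_counit_comul]
  simp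

-- Conjunct 10: counit law (left)
lemma c10 (hent : IsEntwining K A C ψ) :
    entRAct K A C ψ ∘ₗ
        lTensor (A ⊗[K] C) (entCounit K A C ∘ₗ (TensorProduct.mk K A C) 1) ∘ₗ
          entComul K A C = LinearMap.id := by
  ext a c
  simp only [LinearMap.comp_apply, AlgebraTensorModule.curry_apply, curry_apply,
    LinearMap.coe_restrictScalars, LinearMap.id_coe, id_eq]
  rw [entComul_tmul]
  have claim : ∀ z : C ⊗[K] C,
      entRAct K A C ψ
        (lTensor (A ⊗[K] C) (entCounit K A C ∘ₗ (TensorProduct.mk K A C) 1)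
          ((TensorProduct.assoc K A C C).symm (a ⊗ₜ[K] z))) =
        (TensorProduct.mk K A C a)
          ((TensorProduct.rid K C) (lTensor C (Coalgebra.counit (R := K)) z)) := by
    intro z
    induction z using TensorProduct.induction_on with
    | zero => simp
    | tmul c1 c2 =>
        simp only [TensorProduct.assoc_symm_tmul, lTensor_tmul, LinearMap.comp_apply,
          TensorProduct.mk_apply, TensorProduct.rid_tmul]
        rw [entCounit_tmul]
        rw [tmul_smul, tmul_smul, map_smul, hL1, hent.2.2.1, entLAct_tmul, mul_one]
    | add u v hu hv => simp only [tmul_add, map_add, hu, hv]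
  rw [claim, Coalgebra.lTensor_counit_comul]
  simp

theorem stmt18 (hent : IsEntwining K A C ψ) :
    -- `𝒞 = A ⊗ C` is an `A`-bimodule:
    (∀ (x : A ⊗[K] C) (a b : A),
        entRAct K A C ψ ((entRAct K A C ψ (x ⊗ₜ a)) ⊗ₜ b) =
          entRAct K A C ψ (x ⊗ₜ (a * b))) ∧
    (∀ x : A ⊗[K] C, entRAct K A C ψ (x ⊗ₜ (1 : A)) = x) ∧
    (∀ (x : A ⊗[K] C) (a b : A),
        entRAct K A C ψ ((entLAct K A C b x) ⊗ₜ a) =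
          entLAct K A C b (entRAct K A C ψ (x ⊗ₜ a))) ∧
    -- the comultiplication is left `A`-linear ...
    (∀ (a : A) (x : A ⊗[K] C),
        entComul K A C (entLAct K A C a x) =
          rTensor C (entLAct K A C a) (entComul K A C x)) ∧
    -- ... and right `A`-linear:
    (entComul K A C ∘ₗ entRAct K A C ψ =
      entRAct₂ K A C ψ ∘ₗ rTensor A (entComul K A C)) ∧
    -- the comultiplication is coassociative:
    (rTensor C (entComul K A C) ∘ₗ entComul K A C =
      (TensorProduct.assoc K (A ⊗[K] C) C C).symm.toLinearMap ∘ₗ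
        lTensor (A ⊗[K] C) Coalgebra.comul ∘ₗ entComul K A C) ∧
    -- the counit is left `A`-linear ...
    (∀ (a : A) (x : A ⊗[K] C),
        entCounit K A C (entLAct K A C a x) = a * entCounit K A C x) ∧
    -- ... and right `A`-linear:
    (entCounit K A C ∘ₗ entRAct K A C ψ = mul' K A ∘ₗ rTensor A (entCounit K A C)) ∧
    -- the counit laws `(ε ⊗ 𝒞) ∘ Δ = id = (𝒞 ⊗ ε) ∘ Δ`:
    (rTensor C (entCounit K A C) ∘ₗ entComul K A C = LinearMap.id) ∧
    (entRAct K A C ψ ∘ₗ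
        lTensor (A ⊗[K] C) (entCounit K A C ∘ₗ (TensorProduct.mk K A C) 1) ∘ₗ
          entComul K A C = LinearMap.id) :=
  ⟨c1 K A C ψ hent, c2 K A C ψ hent, c3 K A C ψ hent, c4 K A C,
    c5 K A C ψ hent, c6 K A C, c7 K A C, c8 K A C ψ hent, c9 K A C, c10 K A C ψ hent⟩
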